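/- (Turnover.) Let F_1, G_2, H_1 ∈ ℂ^{3×3} be core transformations, where F_1 and H_1 have active part at position 1 and G_2 has active part at position 2. Then there exist core transformations F̃_2, G̃_1, H̃_2 ∈ ℂ^{3×3}, with F̃_2 and H̃_2 having active part at position 2 and G̃_1 having active part at position 1, such that F_1 G_2 H_1 = F̃_2 G̃_1 H̃_2. Moreover, every unitary matrix U ∈ ℂ^{3×3} can be written both in the form F_1 G_2 H_1 and in the form F̃_2 G̃_1 H̃_2 with core transformations of the indicated active positions. -/

import Mathlib

open Matrix

/-- A core transformation with active part at position `j` (0-based; rows/columns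
`j` and `j+1` of an `(n+1) × (n+1)` matrix): a unitary matrix equal to the identity
outside the 2×2 principal submatrix in rows and columns `j, j+1`. -/
def IsCore {n : ℕ} (j : Fin n) (U : Matrix (Fin (n + 1)) (Fin (n + 1)) ℂ) : Prop :=
  U ∈ Matrix.unitaryGroup (Fin (n + 1)) ℂ ∧
  ∀ p q : Fin (n + 1),
    ¬((p = j.castSucc ∨ p = j.succ) ∧ (q = j.castSucc ∨ q = j.succ)) →
      U p q = if p = q then 1 else 0

section Aux

lemma unitary2 (p q r s : ℂ) (h1 : p * star p + q * star q = 1)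
    (h2 : r * star r + s * star s = 1) (h3 : p * star r + q * star s = 0)
    (h4 : r * star p + s * star q = 0) :
    !![p, q; r, s] ∈ Matrix.unitaryGroup (Fin 2) ℂ := by
  rw [Matrix.mem_unitaryGroup_iff]
  ext i j
  fin_cases i <;> fin_cases j <;>
    simp [Matrix.mul_apply, Fin.sum_univ_two, Matrix.star_apply, Matrix.vecHead,
      Matrix.vecTail] <;>
    [exact h1; exact h3; exact h4; exact h2]

def e0 (W : Matrix (Fin 2) (Fin 2) ℂ) : Matrix (Fin 3) (Fin 3) ℂ :=
  !![W 0 0, W 0 1, 0; W 1 0, W 1 1, 0; 0, 0, 1]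

def e1 (W : Matrix (Fin 2) (Fin 2) ℂ) : Matrix (Fin 3) (Fin 3) ℂ :=
  !![1, 0, 0; 0, W 0 0, W 0 1; 0, W 1 0, W 1 1]

lemma e0_star (W : Matrix (Fin 2) (Fin 2) ℂ) : star (e0 W) = e0 (star W) := by
  ext i j
  fin_cases i <;> fin_cases j <;>
    simp [e0, Matrix.star_apply, Matrix.vecHead, Matrix.vecTail]

lemma e1_star (W : Matrix (Fin 2) (Fin 2) ℂ) : star (e1 W) = e1 (star W) := by
  ext i j
  fin_cases i <;> fin_cases j <;>
    simp [e1, Matrix.star_apply, Matrix.vecHead, Matrix.vecTail]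

lemma e0_mul (A B : Matrix (Fin 2) (Fin 2) ℂ) : e0 A * e0 B = e0 (A * B) := by
  ext i j
  fin_cases i <;> fin_cases j <;>
    simp [e0, Matrix.mul_apply, Fin.sum_univ_three, Fin.sum_univ_two, Matrix.vecHead,
      Matrix.vecTail]

lemma e1_mul (A B : Matrix (Fin 2) (Fin 2) ℂ) : e1 A * e1 B = e1 (A * B) := by
  ext i j
  fin_cases i <;> fin_cases j <;>
    simp [e1, Matrix.mul_apply, Fin.sum_univ_three, Fin.sum_univ_two, Matrix.vecHead,
      Matrix.vecTail]

lemma e0_one : e0 1 = 1 := by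
  ext i j
  fin_cases i <;> fin_cases j <;>
    simp [e0, Matrix.one_apply, Matrix.vecHead, Matrix.vecTail]

lemma e1_one : e1 1 = 1 := by
  ext i j
  fin_cases i <;> fin_cases j <;>
    simp [e1, Matrix.one_apply, Matrix.vecHead, Matrix.vecTail]

lemma e0_mem {W : Matrix (Fin 2) (Fin 2) ℂ} (h : W ∈ Matrix.unitaryGroup (Fin 2) ℂ) :
    e0 W ∈ Matrix.unitaryGroup (Fin 3) ℂ := by
  rw [Matrix.mem_unitaryGroup_iff] at h ⊢
  rw [e0_star, e0_mul, h, e0_one]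

lemma e1_mem {W : Matrix (Fin 2) (Fin 2) ℂ} (h : W ∈ Matrix.unitaryGroup (Fin 2) ℂ) :
    e1 W ∈ Matrix.unitaryGroup (Fin 3) ℂ := by
  rw [Matrix.mem_unitaryGroup_iff] at h ⊢
  rw [e1_star, e1_mul, h, e1_one]

lemma e0_core {W : Matrix (Fin 2) (Fin 2) ℂ} (h : W ∈ Matrix.unitaryGroup (Fin 2) ℂ) :
    IsCore (0 : Fin 2) (e0 W) := by
  refine ⟨e0_mem h, ?_⟩
  intro p q hpq
  fin_cases p <;> fin_cases q <;>
    simp_all [e0, Matrix.vecHead, Matrix.vecTail, Fin.ext_iff]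

lemma e1_core {W : Matrix (Fin 2) (Fin 2) ℂ} (h : W ∈ Matrix.unitaryGroup (Fin 2) ℂ) :
    IsCore (1 : Fin 2) (e1 W) := by
  refine ⟨e1_mem h, ?_⟩
  intro p q hpq
  fin_cases p <;> fin_cases q <;>
    simp_all [e1, Matrix.vecHead, Matrix.vecTail, Fin.ext_iff]

lemma IsCore.star' {n : ℕ} {j : Fin n} {U : Matrix (Fin (n + 1)) (Fin (n + 1)) ℂ}
    (h : IsCore j U) : IsCore j (star U) := by
  refine ⟨Unitary.star_mem h.1, ?_⟩
  intro p q hpq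
  have := h.2 q p (by tauto)
  rw [Matrix.star_apply, this]
  by_cases hqp : q = p
  · simp [hqp]
  · simp [hqp, Ne.symm hqp]

lemma coreFromCol0 {N : Matrix (Fin 3) (Fin 3) ℂ}
    (hN : N ∈ Matrix.unitaryGroup (Fin 3) ℂ)
    (h0 : N 0 0 = 1) (h1 : N 1 0 = 0) (h2 : N 2 0 = 0) :
    IsCore (1 : Fin 2) N := by
  have hs : star N * N = 1 := Matrix.mem_unitaryGroup_iff'.mp hN
  have key : ∀ q : Fin 3, q ≠ 0 → N 0 q = 0 := by
    intro q hq
    have := congrFun (congrFun hs 0) q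
    simp [Matrix.mul_apply, Fin.sum_univ_three, Matrix.star_apply, h0, h1, h2,
      Matrix.one_apply, hq.symm] at this
    simpa using this
  refine ⟨hN, ?_⟩
  intro p q hpq
  fin_cases p <;> fin_cases q <;> simp_all

lemma coreFromCol2 {N : Matrix (Fin 3) (Fin 3) ℂ}
    (hN : N ∈ Matrix.unitaryGroup (Fin 3) ℂ)
    (h0 : N 2 2 = 1) (h1 : N 0 2 = 0) (h2 : N 1 2 = 0) :
    IsCore (0 : Fin 2) N := by
  have hs : star N * N = 1 := Matrix.mem_unitaryGroup_iff'.mp hN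
  have key : ∀ q : Fin 3, q ≠ 2 → N 2 q = 0 := by
    intro q hq
    have := congrFun (congrFun hs q) 2
    simp [Matrix.mul_apply, Fin.sum_univ_three, Matrix.star_apply, h0, h1, h2,
      Matrix.one_apply, hq] at this
    simpa using this
  refine ⟨hN, ?_⟩
  intro p q hpq
  fin_cases p <;> fin_cases q <;> simp_all [Fin.ext_iff]

/-- column-zeroing rotation: `W` unitary with `W00 a + W10 b = 0`. -/
lemma colZero (a b : ℂ) : ∃ W ∈ Matrix.unitaryGroup (Fin 2) ℂ,
    W 0 0 * a + W 1 0 * b = 0 := by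
  by_cases h : a = 0 ∧ b = 0
  · exact ⟨1, Submonoid.one_mem _, by simp [h.1, h.2, Matrix.one_apply]⟩
  · have hs : 0 < Complex.normSq a + Complex.normSq b := by
      rcases not_and_or.mp h with h' | h'
      · have := Complex.normSq_pos.mpr h'
        nlinarith [Complex.normSq_nonneg b]
      · have := Complex.normSq_pos.mpr h'
        nlinarith [Complex.normSq_nonneg a]
    obtain ⟨r, hr, hrr⟩ : ∃ r : ℝ, 0 < r ∧
        (r:ℂ) * (r:ℂ) = (Complex.normSq a : ℂ) + (Complex.normSq b : ℂ) := by
      refine ⟨Real.sqrt (Complex.normSq a + Complex.normSq b), Real.sqrt_pos.mpr hs, ?_⟩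
      rw [← Complex.ofReal_mul, Real.mul_self_sqrt hs.le]; push_cast; ring
    have hrne : (r:ℂ) ≠ 0 := by
      simpa using Complex.ofReal_ne_zero.mpr hr.ne'
    have hna : (starRingEnd ℂ) a * a = (Complex.normSq a : ℂ) := by
      rw [mul_comm]; exact Complex.mul_conj a
    have hnb : (starRingEnd ℂ) b * b = (Complex.normSq b : ℂ) := by
      rw [mul_comm]; exact Complex.mul_conj b
    refine ⟨!![-b/r, star a/r; a/r, star b/r], ?_, ?_⟩
    · refine unitary2 _ _ _ _ ?_ ?_ ?_ ?_ <;>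
        (simp only [star_div₀, star_neg, Complex.star_def, Complex.conj_ofReal,
          Complex.conj_conj]; field_simp)
      · linear_combination hna + hnb - hrr
      · linear_combination hna + hnb - hrr
      · ring
      · ring
    · simp [Matrix.vecHead, Matrix.vecTail]
      ring

/-- column-zeroing rotation, second column: `W` unitary with `W01 a + W11 b = 0`. -/
lemma colZero' (a b : ℂ) : ∃ W ∈ Matrix.unitaryGroup (Fin 2) ℂ,
    W 0 1 * a + W 1 1 * b = 0 := by
  by_cases h : a = 0 ∧ b = 0
  · exact ⟨1, Submonoid.one_mem _, by simp [h.1, h.2, Matrix.one_apply]⟩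
  · have hs : 0 < Complex.normSq a + Complex.normSq b := by
      rcases not_and_or.mp h with h' | h'
      · have := Complex.normSq_pos.mpr h'
        nlinarith [Complex.normSq_nonneg b]
      · have := Complex.normSq_pos.mpr h'
        nlinarith [Complex.normSq_nonneg a]
    obtain ⟨r, hr, hrr⟩ : ∃ r : ℝ, 0 < r ∧
        (r:ℂ) * (r:ℂ) = (Complex.normSq a : ℂ) + (Complex.normSq b : ℂ) := by
      refine ⟨Real.sqrt (Complex.normSq a + Complex.normSq b), Real.sqrt_pos.mpr hs, ?_⟩
      rw [← Complex.ofReal_mul, Real.mul_self_sqrt hs.le]; push_cast; ring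
    have hrne : (r:ℂ) ≠ 0 := by
      simpa using Complex.ofReal_ne_zero.mpr hr.ne'
    have hna : (starRingEnd ℂ) a * a = (Complex.normSq a : ℂ) := by
      rw [mul_comm]; exact Complex.mul_conj a
    have hnb : (starRingEnd ℂ) b * b = (Complex.normSq b : ℂ) := by
      rw [mul_comm]; exact Complex.mul_conj b
    refine ⟨!![star a/r, -b/r; star b/r, a/r], ?_, ?_⟩
    · refine unitary2 _ _ _ _ ?_ ?_ ?_ ?_ <;>
        (simp only [star_div₀, star_neg, Complex.star_def, Complex.conj_ofReal,
          Complex.conj_conj]; field_simp)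
      · linear_combination hna + hnb - hrr
      · linear_combination hna + hnb - hrr
      · ring
      · ring
    · simp [Matrix.vecHead, Matrix.vecTail]
      ring

/-- normalized rotation sending `(a,b)` to `(1,0)`. -/
lemma toCol0 (a b : ℂ) (h : star a * a + star b * b = 1) :
    ∃ W ∈ Matrix.unitaryGroup (Fin 2) ℂ,
      W 0 0 * a + W 0 1 * b = 1 ∧ W 1 0 * a + W 1 1 * b = 0 := by
  refine ⟨!![star a, star b; -b, a], ?_, ?_, ?_⟩
  · refine unitary2 _ _ _ _ ?_ ?_ ?_ ?_ <;> simp only [star_neg, star_star]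
    · linear_combination h
    · linear_combination h
    · ring
    · ring
  · simpa [Matrix.vecHead, Matrix.vecTail] using h
  · simp [Matrix.vecHead, Matrix.vecTail]; ring

/-- normalized rotation sending `(a,b)` to `(0,1)`. -/
lemma toCol1 (a b : ℂ) (h : star a * a + star b * b = 1) :
    ∃ W ∈ Matrix.unitaryGroup (Fin 2) ℂ,
      W 0 0 * a + W 0 1 * b = 0 ∧ W 1 0 * a + W 1 1 * b = 1 := by
  refine ⟨!![-b, a; star a, star b], ?_, ?_, ?_⟩
  · refine unitary2 _ _ _ _ ?_ ?_ ?_ ?_ <;> simp only [star_neg, star_star]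
    · linear_combination h
    · linear_combination h
    · ring
    · ring
  · simp [Matrix.vecHead, Matrix.vecTail]; ring
  · simpa [Matrix.vecHead, Matrix.vecTail] using h

/-- Factorization with pattern 0,1,0. -/
lemma factA (U : Matrix (Fin 3) (Fin 3) ℂ) (hU : U ∈ Matrix.unitaryGroup (Fin 3) ℂ) :
    ∃ F G H : Matrix (Fin 3) (Fin 3) ℂ,
      IsCore (0 : Fin 2) F ∧ IsCore (1 : Fin 2) G ∧ IsCore (0 : Fin 2) H ∧
        U = F * G * H := by
  obtain ⟨C, hC, hCz⟩ := colZero (U 2 0) (U 2 1)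
  set M := U * e0 C with hM
  have hMmem : M ∈ Matrix.unitaryGroup (Fin 3) ℂ := mul_mem hU (e0_mem hC)
  have hM20 : M 2 0 = 0 := by
    simp [hM, Matrix.mul_apply, Fin.sum_univ_three, e0, Matrix.vecHead, Matrix.vecTail, Matrix.vecMul, dotProduct]
    linear_combination hCz
  have hnorm : star (M 0 0) * (M 0 0) + star (M 1 0) * (M 1 0) = 1 := by
    have := congrFun (congrFun (Matrix.mem_unitaryGroup_iff'.mp hMmem) 0) 0
    simp [Matrix.mul_apply, Fin.sum_univ_three, Matrix.star_apply, hM20,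
      Matrix.one_apply] at this
    simpa [Complex.star_def] using this
  obtain ⟨L, hL, hL1, hL0⟩ := toCol0 (M 0 0) (M 1 0) hnorm
  set N := e0 L * M with hNdef
  have hNmem : N ∈ Matrix.unitaryGroup (Fin 3) ℂ := mul_mem (e0_mem hL) hMmem
  have hN00 : N 0 0 = 1 := by
    simp [hNdef, Matrix.mul_apply, Fin.sum_univ_three, e0, Matrix.vecHead, Matrix.vecTail, Matrix.vecMul, dotProduct]
    linear_combination hL1
  have hN10 : N 1 0 = 0 := by
    simp [hNdef, Matrix.mul_apply, Fin.sum_univ_three, e0, Matrix.vecHead, Matrix.vecTail, Matrix.vecMul, dotProduct]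
    linear_combination hL0
  have hN20 : N 2 0 = 0 := by
    simp [hNdef, Matrix.mul_apply, Fin.sum_univ_three, e0, Matrix.vecHead, Matrix.vecTail, Matrix.vecMul, dotProduct]
    exact hM20
  have h1 : star (e0 L) * e0 L = 1 := Matrix.mem_unitaryGroup_iff'.mp (e0_mem hL)
  have h2 : e0 C * star (e0 C) = 1 := Matrix.mem_unitaryGroup_iff.mp (e0_mem hC)
  refine ⟨star (e0 L), N, star (e0 C), (e0_core hL).star', coreFromCol0 hNmem hN00 hN10 hN20,
    (e0_core hC).star', ?_⟩
  have e1' : star (e0 L) * N = M := by rw [hNdef, ← mul_assoc, h1, one_mul]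
  have e2' : M * star (e0 C) = U := by rw [hM, mul_assoc, h2, mul_one]
  rw [e1', e2']

/-- Factorization with pattern 1,0,1. -/
lemma factB (U : Matrix (Fin 3) (Fin 3) ℂ) (hU : U ∈ Matrix.unitaryGroup (Fin 3) ℂ) :
    ∃ F G H : Matrix (Fin 3) (Fin 3) ℂ,
      IsCore (1 : Fin 2) F ∧ IsCore (0 : Fin 2) G ∧ IsCore (1 : Fin 2) H ∧
        U = F * G * H := by
  obtain ⟨C, hC, hCz⟩ := colZero' (U 0 1) (U 0 2)
  set M := U * e1 C with hM
  have hMmem : M ∈ Matrix.unitaryGroup (Fin 3) ℂ := mul_mem hU (e1_mem hC)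
  have hM02 : M 0 2 = 0 := by
    simp [hM, Matrix.mul_apply, Fin.sum_univ_three, e1, Matrix.vecHead, Matrix.vecTail, Matrix.vecMul, dotProduct]
    linear_combination hCz
  have hnorm : star (M 1 2) * (M 1 2) + star (M 2 2) * (M 2 2) = 1 := by
    have := congrFun (congrFun (Matrix.mem_unitaryGroup_iff'.mp hMmem) 2) 2
    simp [Matrix.mul_apply, Fin.sum_univ_three, Matrix.star_apply, hM02,
      Matrix.one_apply] at this
    simpa [Complex.star_def] using this
  obtain ⟨L, hL, hL0, hL1⟩ := toCol1 (M 1 2) (M 2 2) hnorm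
  set N := e1 L * M with hNdef
  have hNmem : N ∈ Matrix.unitaryGroup (Fin 3) ℂ := mul_mem (e1_mem hL) hMmem
  have hN22 : N 2 2 = 1 := by
    simp [hNdef, Matrix.mul_apply, Fin.sum_univ_three, e1, Matrix.vecHead, Matrix.vecTail, Matrix.vecMul, dotProduct]
    linear_combination hL1
  have hN12 : N 1 2 = 0 := by
    simp [hNdef, Matrix.mul_apply, Fin.sum_univ_three, e1, Matrix.vecHead, Matrix.vecTail, Matrix.vecMul, dotProduct]
    linear_combination hL0
  have hN02 : N 0 2 = 0 := by
    simp [hNdef, Matrix.mul_apply, Fin.sum_univ_three, e1, Matrix.vecHead, Matrix.vecTail, Matrix.vecMul, dotProduct]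
    exact hM02
  have h1 : star (e1 L) * e1 L = 1 := Matrix.mem_unitaryGroup_iff'.mp (e1_mem hL)
  have h2 : e1 C * star (e1 C) = 1 := Matrix.mem_unitaryGroup_iff.mp (e1_mem hC)
  refine ⟨star (e1 L), N, star (e1 C), (e1_core hL).star', coreFromCol2 hNmem hN22 hN02 hN12,
    (e1_core hC).star', ?_⟩
  have e1' : star (e1 L) * N = M := by rw [hNdef, ← mul_assoc, h1, one_mul]
  have e2' : M * star (e1 C) = U := by rw [hM, mul_assoc, h2, mul_one]
  rw [e1', e2']

end Aux

/-- **Turnover.**  A product `F₁ G₂ H₁` of core transformations (positions 1,2,1;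
0-based 0,1,0) can be refactored as `F̃₂ G̃₁ H̃₂` (positions 2,1,2; 0-based 1,0,1);
moreover every 3×3 unitary matrix can be written in both shapes. -/
theorem turnover :
    (∀ F G H : Matrix (Fin 3) (Fin 3) ℂ,
      IsCore (0 : Fin 2) F → IsCore (1 : Fin 2) G → IsCore (0 : Fin 2) H →
        ∃ F' G' H' : Matrix (Fin 3) (Fin 3) ℂ,
          IsCore (1 : Fin 2) F' ∧ IsCore (0 : Fin 2) G' ∧ IsCore (1 : Fin 2) H' ∧
            F * G * H = F' * G' * H') ∧
    (∀ U : Matrix (Fin 3) (Fin 3) ℂ, U ∈ Matrix.unitaryGroup (Fin 3) ℂ →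
      (∃ F G H : Matrix (Fin 3) (Fin 3) ℂ,
        IsCore (0 : Fin 2) F ∧ IsCore (1 : Fin 2) G ∧ IsCore (0 : Fin 2) H ∧
          U = F * G * H) ∧
      (∃ F' G' H' : Matrix (Fin 3) (Fin 3) ℂ,
        IsCore (1 : Fin 2) F' ∧ IsCore (0 : Fin 2) G' ∧ IsCore (1 : Fin 2) H' ∧
          U = F' * G' * H')) := by
  constructor
  · intro F G H hF hG hH
    obtain ⟨F', G', H', h1, h2, h3, h4⟩ :=
      factB (F * G * H) (mul_mem (mul_mem hF.1 hG.1) hH.1)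
    exact ⟨F', G', H', h1, h2, h3, h4⟩
  · intro U hU
    exact ⟨factA U hU, factB U hU⟩
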